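/- Let p be a prime and n ≥ 1. Consider the ideals of ℤ[x]: I_n = {f ∈ ℤ[x] : f(a) ≡ 0 (mod p^n) for all a ∈ ℤ} and J_n = the ideal generated by {p^{n−k}·(x^p−x)^k : 0 ≤ k ≤ n}. Then the index of I_n in ℤ[x] (as additive groups) is p^{Σ_{k=1}^n β_p(k)}, the index of J_n in ℤ[x] is p^{p+2p+⋯+np}, and J_n = I_n if and only if n ≤ p; for n > p, J_n is properly contained in I_n. -/

import Mathlib

/-- `α_p(n)`: the `p`-adic valuation of `n!`. -/
def alphaP (p n : ℕ) : ℕ := padicValNat p (Nat.factorial n)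

/-- `β_p(n)`: the least `m` with `α_p(m) ≥ n`. -/
noncomputable def betaP (p n : ℕ) : ℕ := sInf {m | n ≤ alphaP p m}

/-- The ideal `I_n = {f ∈ ℤ[x] : p^n ∣ f(a) for all a ∈ ℤ}`. -/
noncomputable def idealI (p n : ℕ) : Ideal (Polynomial ℤ) where
  carrier := {f | ∀ a : ℤ, (p : ℤ) ^ n ∣ f.eval a}
  add_mem' := fun hf hg a => by
    simpa [Polynomial.eval_add] using dvd_add (hf a) (hg a)
  zero_mem' := fun a => by simp
  smul_mem' := fun c f hf a => by
    simpa [Polynomial.eval_mul, smul_eq_mul] using (hf a).mul_left (c.eval a)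

/-- The ideal `J_n` generated by `p^{n-k}(x^p - x)^k` for `0 ≤ k ≤ n`. -/
noncomputable def idealJ (p n : ℕ) : Ideal (Polynomial ℤ) :=
  Ideal.span {g | ∃ k ≤ n,
    g = Polynomial.C ((p : ℤ) ^ (n - k)) * (Polynomial.X ^ p - Polynomial.X) ^ k}

set_option linter.unusedSectionVars false

open Polynomial Finset


section BasisOfMonic
variable (e : ℕ → Polynomial ℤ) (hm : ∀ d, (e d).Monic) (hd : ∀ d, (e d).natDegree = d)

include hm hd in
lemma linIndep_monic : LinearIndependent ℤ e := by
  rw [linearIndependent_iff']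
  intro s g hsum
  induction s using Finset.induction_on_max with
  | empty => simp
  | insert a s ha ih =>
    have hga : g a = 0 := by
      have := congrArg (fun q => Polynomial.coeff q a) hsum
      simp only [Polynomial.finset_sum_coeff, Polynomial.coeff_smul, Polynomial.coeff_zero,
        smul_eq_mul] at this
      rw [Finset.sum_insert (fun h => lt_irrefl a (ha a h))] at this
      rw [Finset.sum_eq_zero (fun i hi => by
        rw [Polynomial.coeff_eq_zero_of_natDegree_lt (by rw [hd]; exact ha i hi), mul_zero])] at this
      have h1 : (e a).coeff a = 1 := by
        have := (hm a).coeff_natDegree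
        rwa [hd] at this
      rw [h1, mul_one, add_zero] at this
      exact this
    intro i hi
    rcases Finset.mem_insert.mp hi with rfl | hi'
    · exact hga
    · refine ih ?_ i hi'
      rw [Finset.sum_insert (fun h => lt_irrefl i ?_), hga, zero_smul, zero_add] at hsum
      · exact hsum
      · exact absurd h (fun h' => lt_irrefl a (ha a h'))

include hm hd in
lemma span_monic_aux : ∀ (N : ℕ) (f : Polynomial ℤ), f.natDegree < N →
    f ∈ Submodule.span ℤ (Set.range e)
  | 0, f, h => absurd h (by omega)
  | N+1, f, h => by
    by_cases h0 : f = 0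
    · simp [h0]
    set d := f.natDegree with hdf
    set g := f - f.leadingCoeff • e d with hg
    have hed : (e d).natDegree = d := hd d
    have h1 : (e d).coeff d = 1 := by
      have := (hm d).coeff_natDegree
      rwa [hed] at this
    have hcg : g.coeff d = 0 := by
      simp only [hg, Polynomial.coeff_sub, Polynomial.coeff_smul, smul_eq_mul, h1, mul_one]
      rw [hdf, Polynomial.coeff_natDegree, sub_self]
    have hgd : g.natDegree ≤ d := by
      refine le_trans (Polynomial.natDegree_sub_le _ _) (max_le le_rfl ?_)
      exact le_trans (Polynomial.natDegree_smul_le _ _) (le_of_eq hed)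
    have hmem : f.leadingCoeff • e d ∈ Submodule.span ℤ (Set.range e) :=
      Submodule.smul_mem _ _ (Submodule.subset_span ⟨d, rfl⟩)
    by_cases hg0 : g = 0
    · have : f = f.leadingCoeff • e d := by rw [← sub_eq_zero]; exact hg0
      rw [this]; exact hmem
    · have hlt : g.natDegree < d := by
        rcases lt_or_eq_of_le hgd with h' | h'
        · exact h'
        · exfalso
          have := Polynomial.leadingCoeff_ne_zero.mpr hg0
          rw [Polynomial.leadingCoeff, h'] at this
          exact this hcg
      have : f = g + f.leadingCoeff • e d := by rw [hg]; ring
      rw [this]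
      exact Submodule.add_mem _ (span_monic_aux N g (by omega)) hmem

noncomputable def basisOfMonic : Module.Basis ℕ ℤ (Polynomial ℤ) :=
  Module.Basis.mk (linIndep_monic e hm hd)
    (fun f _ => span_monic_aux e hm hd (f.natDegree + 1) f (by omega))

@[simp] lemma basisOfMonic_apply (d : ℕ) : basisOfMonic e hm hd d = e d := Module.Basis.mk_apply _ _ d

end BasisOfMonic

section Index

lemma mem_span_smul_basis (b : Module.Basis ℕ ℤ (Polynomial ℤ)) (c : ℕ → ℕ) (f : Polynomial ℤ) :
    f ∈ Submodule.span ℤ (Set.range fun d => (c d : ℤ) • b d) ↔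
      ∀ d, (c d : ℤ) ∣ b.repr f d := by
  constructor
  · intro hf
    induction hf using Submodule.span_induction with
    | mem x hx =>
      obtain ⟨d, rfl⟩ := hx
      intro d'
      dsimp only
      simp only [map_smul, Module.Basis.repr_self, Finsupp.smul_single, smul_eq_mul, mul_one,
        Finsupp.single_apply]
      split
      · next h => exact h ▸ dvd_rfl
      · exact dvd_zero _
    | zero => simp
    | add x y _ _ hx hy => intro d; rw [map_add]; exact dvd_add (hx d) (hy d)
    | smul a x _ hx =>
      intro d
      simp only [map_smul, Finsupp.coe_smul, Pi.smul_apply, smul_eq_mul]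
      exact Dvd.dvd.mul_left (hx d) a
  · intro hf
    have hrepr := b.linearCombination_repr f
    rw [Finsupp.linearCombination_apply] at hrepr
    rw [← hrepr]
    refine Submodule.sum_mem _ (fun d _ => ?_)
    obtain ⟨q, hq⟩ := hf d
    dsimp only
    rw [hq, mul_comm, mul_smul]
    exact Submodule.smul_mem _ q (Submodule.subset_span (Set.mem_range_self d))

lemma index_span_smul_basis (b : Module.Basis ℕ ℤ (Polynomial ℤ)) (c : ℕ → ℕ) (hc : ∀ d, c d ≠ 0) (D : ℕ)
    (hD : ∀ d, D ≤ d → c d = 1) :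
    ((Submodule.span ℤ (Set.range fun d => (c d : ℤ) • b d)).toAddSubgroup).index
      = ∏ d ∈ Finset.range D, c d := by
  haveI : ∀ d : Fin D, NeZero (c d.val) := fun d => ⟨hc d.val⟩
  let φ : Polynomial ℤ →+ ((d : Fin D) → ZMod (c d.val)) :=
    { toFun := fun f d => ((b.repr f d.val : ℤ) : ZMod (c d.val))
      map_zero' := by funext d; simp
      map_add' := by intro x y; funext d; push_cast [map_add]; simp }
  have hker : φ.ker = (Submodule.span ℤ
      (Set.range fun d => (c d : ℤ) • b d)).toAddSubgroup := by
    ext f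
    rw [AddMonoidHom.mem_ker, Submodule.mem_toAddSubgroup, mem_span_smul_basis]
    constructor
    · intro h d
      by_cases hdD : d < D
      · have := congrFun h ⟨d, hdD⟩
        have h2 : ((b.repr f d : ℤ) : ZMod (c d)) = 0 := by simpa [φ] using this
        rwa [ZMod.intCast_zmod_eq_zero_iff_dvd] at h2
      · rw [hD d (by omega)]; exact one_dvd _
    · intro h
      funext d
      show ((b.repr f d.val : ℤ) : ZMod (c d.val)) = 0
      rw [ZMod.intCast_zmod_eq_zero_iff_dvd]
      exact h d.val
  have hsurj : Function.Surjective φ := by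
    intro v
    refine ⟨∑ d : Fin D, (((v d).val : ℤ)) • b d.val, ?_⟩
    funext d₀
    have : b.repr (∑ d : Fin D, (((v d).val : ℤ)) • b d.val) d₀.val
        = ((v d₀).val : ℤ) := by
      rw [map_sum]
      simp only [map_smul, Module.Basis.repr_self, Finsupp.smul_single, smul_eq_mul, mul_one]
      rw [Finsupp.finset_sum_apply]
      rw [Finset.sum_eq_single d₀]
      · simp [Finsupp.single_apply]
      · intro d _ hne
        rw [Finsupp.single_apply, if_neg (fun h => hne (Fin.ext h))]
      · intro h; exact absurd (Finset.mem_univ d₀) h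
    simp only [φ, AddMonoidHom.coe_mk, ZeroHom.coe_mk, this]
    push_cast
    exact ZMod.natCast_rightInverse (v d₀)
  rw [← hker, AddSubgroup.index_ker]
  rw [AddMonoidHom.range_eq_top.mpr hsurj]
  rw [Nat.card_congr AddSubgroup.topEquiv.toEquiv, Nat.card_pi]
  simp only [Nat.card_zmod]
  exact Fin.prod_univ_eq_prod_range (fun d => c d) D

end Index




section Alpha
variable {p : ℕ} (hp : p.Prime)
include hp

lemma alphaP_mono : Monotone (alphaP p) := by
  haveI : Fact p.Prime := ⟨hp⟩
  apply monotone_nat_of_le_succ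
  intro m
  unfold alphaP
  rw [← padicValNat_dvd_iff_le (Nat.factorial_ne_zero _)]
  exact (pow_padicValNat_dvd).trans (Nat.factorial_dvd_factorial (Nat.le_succ m))

lemma alphaP_mul_p (k : ℕ) : alphaP p (p * k) = alphaP p k + k := by
  haveI : Fact p.Prime := ⟨hp⟩
  exact padicValNat_factorial_mul k

lemma le_alphaP_mul (k : ℕ) : k ≤ alphaP p (k * p) := by
  rw [mul_comm, alphaP_mul_p hp]; omega

lemma betaP_le (k : ℕ) : betaP p k ≤ k * p :=
  Nat.sInf_le (le_alphaP_mul hp k)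

lemma le_alphaP_betaP (k : ℕ) : k ≤ alphaP p (betaP p k) :=
  Nat.sInf_mem (⟨k * p, le_alphaP_mul hp k⟩ : Set.Nonempty {m | k ≤ alphaP p m})

lemma lt_betaP_iff {d k : ℕ} : d < betaP p k ↔ alphaP p d < k := by
  constructor
  · intro h
    by_contra hc
    have h2 : betaP p k ≤ d := Nat.sInf_le (show k ≤ alphaP p d by omega)
    omega
  · intro h
    by_contra hc
    have := (alphaP_mono hp) (by omega : betaP p k ≤ d)
    have := le_alphaP_betaP hp k
    omega

lemma betaP_mono {k l : ℕ} (h : k ≤ l) : betaP p k ≤ betaP p l :=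
  Nat.sInf_le (le_trans h (le_alphaP_betaP hp l))

lemma alphaP_lt_of_lt {d : ℕ} {k : ℕ} (hk : k ≤ p) (hd : d < k * p) : alphaP p d < k := by
  haveI : Fact p.Prime := ⟨hp⟩
  have h1 : alphaP p d = alphaP p (p * (d / p)) := (congrArg (padicValNat p) (by
    exact congrArg _ rfl)).trans (padicValNat_mul_div_factorial d).symm
  have hq : d / p < k := Nat.div_lt_of_lt_mul (by rw [Nat.mul_comm p k]; exact hd)
  have hqp : d / p < p := by omega
  have h0 : alphaP p (d / p) = 0 := by
    apply padicValNat.eq_zero_of_not_dvd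
    rw [Nat.Prime.dvd_factorial hp]
    omega
  rw [h1, alphaP_mul_p hp, h0]
  omega

lemma betaP_eq_of_le {k : ℕ} (hk : k ≤ p) : betaP p k = k * p := by
  refine le_antisymm (betaP_le hp k) ?_
  by_contra hc
  have := lt_betaP_iff hp (d := betaP p k) (k := k) |>.mpr ?_
  · omega
  · exact alphaP_lt_of_lt hp hk (by omega)

lemma betaP_lt_of_gt {k : ℕ} (hk : p < k) : betaP p k < k * p := by
  haveI : Fact p.Prime := ⟨hp⟩
  have h1 : k ≤ alphaP p ((k-1) * p) := by
    rw [mul_comm, alphaP_mul_p hp]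
    have hdvd : p ∣ Nat.factorial (k - 1) := hp.dvd_factorial.mpr (by omega)
    have := one_le_padicValNat_of_dvd (Nat.factorial_pos (k-1)).ne' hdvd
    unfold alphaP
    omega
  have h2 : betaP p k ≤ (k - 1) * p := Nat.sInf_le h1
  have hp1 : 0 < p := hp.pos
  have : (k - 1) * p < k * p := (Nat.mul_lt_mul_right hp1).mpr (by omega)
  omega

lemma sum_betaP {n : ℕ} :
    ∑ d ∈ range (betaP p n), (n - alphaP p d) = ∑ k ∈ Icc 1 n, betaP p k := by
  have step : ∀ d ∈ range (betaP p n),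
      n - alphaP p d = ∑ k ∈ Icc 1 n, if alphaP p d < k then 1 else 0 := by
    intro d hd
    rw [← Finset.sum_filter]
    simp only [Finset.sum_const, smul_eq_mul, mul_one]
    have : Finset.filter (fun k => alphaP p d < k) (Icc 1 n) = Icc (alphaP p d + 1) n := by
      ext k
      simp only [Finset.mem_filter, Finset.mem_Icc]
      omega
    rw [this, Nat.card_Icc]
    omega
  rw [Finset.sum_congr rfl step, Finset.sum_comm]
  refine Finset.sum_congr rfl (fun k hk => ?_)
  rw [← Finset.sum_filter]
  simp only [Finset.sum_const, smul_eq_mul, mul_one]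
  have hkn : k ≤ n := (Finset.mem_Icc.mp hk).2
  have : Finset.filter (fun d => alphaP p d < k) (range (betaP p n)) = range (betaP p k) := by
    ext d
    simp only [Finset.mem_filter, Finset.mem_range]
    constructor
    · rintro ⟨-, h2⟩; exact (lt_betaP_iff hp).mpr h2
    · intro h
      exact ⟨lt_of_lt_of_le h (betaP_mono hp hkn), (lt_betaP_iff hp).mp h⟩
  rw [this, Finset.card_range]

end Alpha



noncomputable def pdelta (f : Polynomial ℤ) : Polynomial ℤ := f.comp (X + 1) - f

lemma pdelta_eval (f : Polynomial ℤ) (a : ℤ) :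
    (pdelta f).eval a = f.eval (a + 1) - f.eval a := by
  simp [pdelta, eval_comp]

lemma coeff_comp_X_add_one (f : Polynomial ℤ) (j : ℕ) :
    (f.comp (X + 1)).coeff j = ∑ e ∈ f.support, f.coeff e * (e.choose j) := by
  rw [Polynomial.comp_eq_sum_left, Polynomial.sum_def, Polynomial.finset_sum_coeff]
  refine Finset.sum_congr rfl (fun e _ => ?_)
  rw [Polynomial.coeff_C_mul, Polynomial.coeff_X_add_one_pow]

lemma pdelta_coeff_eq_zero {f : Polynomial ℤ} {D j : ℕ} (hf : f.natDegree ≤ D) (hj : D ≤ j) :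
    (pdelta f).coeff j = 0 := by
  rw [pdelta, Polynomial.coeff_sub, coeff_comp_X_add_one]
  rw [Finset.sum_eq_single j]
  · by_cases h : j ∈ f.support
    · simp
    · rw [Polynomial.notMem_support_iff.mp h]; simp
  · intro e he hne
    have : e ≤ D := le_trans (Polynomial.le_natDegree_of_mem_supp e he) hf
    rw [Nat.choose_eq_zero_of_lt (by omega), Nat.cast_zero, mul_zero]
  · intro h
    rw [Polynomial.notMem_support_iff.mp h]; simp

lemma pdelta_natDegree_le {f : Polynomial ℤ} {D : ℕ} (hf : f.natDegree ≤ D) :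
    (pdelta f).natDegree ≤ D - 1 := by
  rw [Polynomial.natDegree_le_iff_coeff_eq_zero]
  intro j hj
  exact pdelta_coeff_eq_zero hf (by omega)

lemma pdelta_add (f g : Polynomial ℤ) : pdelta (f + g) = pdelta f + pdelta g := by
  simp only [pdelta, Polynomial.add_comp]; ring

lemma pdelta_coeff_top {f : Polynomial ℤ} {D : ℕ} (hf : f.natDegree ≤ D) (hD : 1 ≤ D) :
    (pdelta f).coeff (D - 1) = D * f.coeff D := by
  -- split off the top monomial
  set g := f - C (f.coeff D) * X ^ D with hg
  have hfg : f = g + C (f.coeff D) * X ^ D := by rw [hg]; ring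
  have hgdeg : g.natDegree ≤ D - 1 := by
    rw [Polynomial.natDegree_le_iff_coeff_eq_zero]
    intro j hj
    rw [hg, Polynomial.coeff_sub, Polynomial.coeff_C_mul, Polynomial.coeff_X_pow]
    by_cases h : j = D
    · subst h; simp
    · have hjD : D < j := by omega
      rw [Polynomial.coeff_eq_zero_of_natDegree_lt (by omega), if_neg h]
      simp
  have h1 : (pdelta g).coeff (D - 1) = 0 :=
    pdelta_coeff_eq_zero hgdeg (by omega)
  have h2 : (pdelta (C (f.coeff D) * X ^ D)).coeff (D - 1) = D * f.coeff D := by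
    have : pdelta (C (f.coeff D) * X ^ D) = C (f.coeff D) * ((X + 1) ^ D - X ^ D) := by
      simp only [pdelta, Polynomial.mul_comp, Polynomial.C_comp, Polynomial.X_pow_comp]
      ring
    rw [this, Polynomial.coeff_C_mul, Polynomial.coeff_sub, Polynomial.coeff_X_add_one_pow,
      Polynomial.coeff_X_pow, if_neg (by omega)]
    have hch : D.choose (D - 1) = D := by
      have hd1 : D - (D - 1) = 1 := by omega
      rw [← Nat.choose_symm (by omega : D - 1 ≤ D), hd1, Nat.choose_one_right]
    rw [hch]
    ring
  nth_rewrite 1 [hfg]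
  rw [pdelta_add, Polynomial.coeff_add, h1, h2, zero_add]

lemma dvd_factorial_mul_coeff {p : ℕ} (hp : p.Prime) {n : ℕ} :
    ∀ (D : ℕ) (f : Polynomial ℤ), (∀ a : ℤ, (p : ℤ) ^ n ∣ f.eval a) → f.natDegree ≤ D →
      (p : ℤ) ^ n ∣ (D.factorial : ℤ) * f.coeff D
  | 0, f, hf, hdeg => by
    simpa [Nat.factorial, Polynomial.coeff_zero_eq_eval_zero] using hf 0
  | D + 1, f, hf, hdeg => by
    have hdvd : ∀ a : ℤ, (p : ℤ) ^ n ∣ (pdelta f).eval a := by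
      intro a
      rw [pdelta_eval]
      exact dvd_sub (hf (a + 1)) (hf a)
    have ih := dvd_factorial_mul_coeff hp D (pdelta f) hdvd
      (le_trans (pdelta_natDegree_le hdeg) (by omega))
    have htop : (pdelta f).coeff D = ((D : ℤ) + 1) * f.coeff (D + 1) := by
      have := pdelta_coeff_top hdeg (by omega)
      simpa using this
    rw [htop] at ih
    have heq : ((D+1).factorial : ℤ) * f.coeff (D+1)
        = (D.factorial : ℤ) * (((D : ℤ) + 1) * f.coeff (D + 1)) := by
      rw [Nat.factorial_succ]; push_cast; ring
    rw [heq]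
    exact ih

lemma coeff_dvd_of_dvd_factorial_mul {p : ℕ} (hp : p.Prime) {n D : ℕ} {c : ℤ}
    (h : (p : ℤ) ^ n ∣ (D.factorial : ℤ) * c) :
    (p : ℤ) ^ (n - alphaP p D) ∣ c := by
  haveI : Fact p.Prime := ⟨hp⟩
  rcases eq_or_ne c 0 with rfl | hc
  · exact dvd_zero _
  have hnat : p ^ n ∣ D.factorial * c.natAbs := by
    have h2 := Int.natAbs_dvd_natAbs.mpr h
    simpa [Int.natAbs_mul, Int.natAbs_pow] using h2
  have hcn : c.natAbs ≠ 0 := by simpa using hc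
  have h1 : n ≤ padicValNat p (D.factorial * c.natAbs) :=
    (padicValNat_dvd_iff_le (Nat.mul_ne_zero (Nat.factorial_ne_zero D) hcn)).mp hnat
  rw [padicValNat.mul (Nat.factorial_ne_zero D) hcn] at h1
  have h2 : n - alphaP p D ≤ padicValNat p c.natAbs := by
    unfold alphaP
    omega
  have h3 : p ^ (n - alphaP p D) ∣ c.natAbs := (padicValNat_dvd_iff_le hcn).mpr h2
  exact Int.dvd_natAbs.mp (by exact_mod_cast Int.natCast_dvd_natCast.mpr h3)


lemma mem_idealI (p n : ℕ) (f : Polynomial ℤ) :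
    f ∈ idealI p n ↔ ∀ a : ℤ, (p : ℤ) ^ n ∣ f.eval a := Iff.rfl

lemma factorial_dvd_descPochhammer_eval (d : ℕ) (a : ℤ) :
    (d.factorial : ℤ) ∣ (descPochhammer ℤ d).eval a := by
  rw [Polynomial.eval_eq_smeval, Ring.descPochhammer_eq_factorial_smul_choose]
  exact ⟨Ring.choose a d, by rw [nsmul_eq_mul]⟩

section I
variable {p : ℕ} (hp : p.Prime) (n : ℕ)
include hp

lemma genI_mem (d : ℕ) (a : ℤ) :
    (p : ℤ) ^ n ∣ (((p:ℤ) ^ (n - alphaP p d)) • descPochhammer ℤ d).eval a := by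
  haveI : Fact p.Prime := ⟨hp⟩
  have hα : (p:ℤ) ^ (min (alphaP p d) n) ∣ (d.factorial : ℤ) := by
    have h1 : p ^ (min (alphaP p d) n) ∣ d.factorial :=
      (pow_dvd_pow p (min_le_left _ _)).trans (pow_padicValNat_dvd)
    exact_mod_cast Int.natCast_dvd_natCast.mpr h1
  have hsplit : (p:ℤ) ^ n = (p:ℤ) ^ (n - alphaP p d) * (p:ℤ) ^ (min (alphaP p d) n) := by
    rw [← pow_add]
    congr 1
    omega
  rw [Polynomial.smul_eq_C_mul, Polynomial.eval_mul, Polynomial.eval_C, hsplit]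
  exact mul_dvd_mul dvd_rfl (hα.trans (factorial_dvd_descPochhammer_eval d a))

lemma idealI_span_aux :
    ∀ (N : ℕ) (f : Polynomial ℤ), f.natDegree < N → (∀ a : ℤ, (p:ℤ)^n ∣ f.eval a) →
    f ∈ Submodule.span ℤ (Set.range fun d => ((p:ℤ) ^ (n - alphaP p d)) • descPochhammer ℤ d)
  | 0, f, h, _ => absurd h (by omega)
  | N+1, f, h, hf => by
    by_cases h0 : f = 0
    · simp [h0]
    set d := f.natDegree with hdf
    have hc : (p:ℤ)^(n - alphaP p d) ∣ f.coeff d :=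
      coeff_dvd_of_dvd_factorial_mul hp (dvd_factorial_mul_coeff hp d f hf le_rfl)
    obtain ⟨q, hq⟩ := hc
    set E : Polynomial ℤ := ((p:ℤ) ^ (n - alphaP p d)) • descPochhammer ℤ d with hE
    have hEmem : E ∈ Submodule.span ℤ
        (Set.range fun d => ((p:ℤ) ^ (n - alphaP p d)) • descPochhammer ℤ d) :=
      Submodule.subset_span (Set.mem_range_self d)
    set g := f - q • E with hg
    have hgdvd : ∀ a : ℤ, (p:ℤ)^n ∣ g.eval a := by
      intro a
      rw [hg, Polynomial.eval_sub]
      refine dvd_sub (hf a) ?_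
      rw [Polynomial.smul_eq_C_mul, Polynomial.eval_mul, Polynomial.eval_C]
      exact Dvd.dvd.mul_left (genI_mem hp n d a) q
    have hmonE : (descPochhammer ℤ d).coeff d = 1 := by
      have h1 := monic_descPochhammer ℤ d
      have h2 := descPochhammer_natDegree (R := ℤ) d
      have := h1.coeff_natDegree
      rwa [h2] at this
    have hcoeffE : E.coeff d = (p:ℤ) ^ (n - alphaP p d) := by
      rw [hE, Polynomial.coeff_smul, hmonE, smul_eq_mul, mul_one]
    have hcg : g.coeff d = 0 := by
      rw [hg, Polynomial.coeff_sub, Polynomial.coeff_smul, hcoeffE, hq, smul_eq_mul]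
      ring
    have hdegE : E.natDegree ≤ d := by
      rw [hE]
      refine le_trans (Polynomial.natDegree_smul_le _ _) ?_
      rw [descPochhammer_natDegree]
    have hgd : g.natDegree ≤ d := by
      rw [hg]
      refine le_trans (Polynomial.natDegree_sub_le _ _) (max_le le_rfl ?_)
      exact le_trans (Polynomial.natDegree_smul_le _ _) hdegE
    have hfeq : f = g + q • E := by rw [hg]; ring
    by_cases hg0 : g = 0
    · rw [hfeq, hg0, zero_add]
      exact Submodule.smul_mem _ q hEmem
    · have hlt : g.natDegree < d := by
        rcases lt_or_eq_of_le hgd with h' | h'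
        · exact h'
        · exfalso
          have := Polynomial.leadingCoeff_ne_zero.mpr hg0
          rw [Polynomial.leadingCoeff, h'] at this
          exact this hcg
      rw [hfeq]
      exact Submodule.add_mem _ (idealI_span_aux N g (by omega) hgdvd)
        (Submodule.smul_mem _ q hEmem)

lemma mem_idealI_iff (f : Polynomial ℤ) :
    f ∈ idealI p n ↔ f ∈ Submodule.span ℤ
      (Set.range fun d => ((p:ℤ) ^ (n - alphaP p d)) • descPochhammer ℤ d) := by
  constructor
  · intro hf
    exact idealI_span_aux hp n (f.natDegree + 1) f (by omega) hf
  · intro hf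
    induction hf using Submodule.span_induction with
    | mem x hx =>
      obtain ⟨d, rfl⟩ := hx
      intro a
      exact genI_mem hp n d a
    | zero => intro a; simp
    | add x y _ _ hx hy =>
      intro a
      rw [Polynomial.eval_add]
      exact dvd_add (hx a) (hy a)
    | smul c x _ hx =>
      intro a
      rw [Polynomial.smul_eq_C_mul, Polynomial.eval_mul, Polynomial.eval_C]
      exact Dvd.dvd.mul_left (hx a) c

end I



noncomputable def eJ (p n d : ℕ) : Polynomial ℤ :=
  (X ^ p - X) ^ (min (d / p) n) * X ^ (d - p * min (d / p) n)

section J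
variable {p : ℕ} (hp : p.Prime) (n : ℕ)
include hp

lemma monic_XpX : (X ^ p - X : Polynomial ℤ).Monic := by
  refine Polynomial.Monic.sub_of_left (monic_X_pow p) ?_
  rw [Polynomial.degree_X_pow, Polynomial.degree_X]
  exact_mod_cast hp.one_lt

lemma natDegree_XpX : (X ^ p - X : Polynomial ℤ).natDegree = p := by
  rw [Polynomial.natDegree_sub_eq_left_of_natDegree_lt, Polynomial.natDegree_X_pow]
  rw [Polynomial.natDegree_X, Polynomial.natDegree_X_pow]
  exact hp.one_lt

lemma monic_eJ (d : ℕ) : (eJ p n d).Monic :=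
  ((monic_XpX hp).pow _).mul (monic_X_pow _)

lemma pk_le (d : ℕ) : p * min (d / p) n ≤ d :=
  le_trans (Nat.mul_le_mul_left p (min_le_left _ _)) (Nat.mul_div_le d p)

lemma natDegree_eJ (d : ℕ) : (eJ p n d).natDegree = d := by
  rw [eJ, ((monic_XpX hp).pow _).natDegree_mul (monic_X_pow _),
    (monic_XpX hp).natDegree_pow, natDegree_XpX hp, Polynomial.natDegree_X_pow]
  have h := pk_le hp n d
  rw [Nat.mul_comm]
  omega

lemma spanJ_gen_mem_idealJ (d : ℕ) :
    ((p:ℤ) ^ (n - d / p)) • eJ p n d ∈ idealJ p n := by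
  rw [Polynomial.smul_eq_C_mul, eJ, ← mul_assoc,
    show n - d / p = n - min (d / p) n from by omega]
  exact Ideal.mul_mem_right _ _
    (Ideal.subset_span ⟨min (d / p) n, min_le_right _ _, rfl⟩)

lemma div_cases (d : ℕ) :
    min ((d+1) / p) n = min (d / p) n ∨
      (min ((d+1) / p) n = min (d / p) n + 1 ∧ d / p < n ∧ (d+1) = p * (d / p + 1)) := by
  have h1 : d / p ≤ (d+1) / p := Nat.div_le_div_right (by omega)
  have h2 : (d+1) / p ≤ d / p + 1 := by
    have h0 : (d + p) / p = d / p + 1 := Nat.add_div_right _ hp.pos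
    calc (d+1)/p ≤ (d+p)/p := Nat.div_le_div_right (by have := hp.two_le; omega)
      _ = d / p + 1 := h0
  rcases eq_or_ne ((d+1)/p) (d/p) with h | h
  · left; rw [h]
  · have h3 : (d+1)/p = d/p + 1 := by omega
    have hdvd : p ∣ d + 1 := by
      by_contra hnd
      rw [Nat.succ_div, if_neg hnd] at h3
      omega
    have h5 : d + 1 = p * (d/p + 1) := by
      rw [← h3]
      exact (Nat.mul_div_cancel' hdvd).symm
    by_cases h4 : d / p < n
    · right; exact ⟨by omega, h4, h5⟩
    · left; omega

lemma X_mul_gen_mem (d : ℕ) :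
    X * (((p:ℤ) ^ (n - d / p)) • eJ p n d) ∈
      Submodule.span ℤ (Set.range fun d => ((p:ℤ) ^ (n - d / p)) • eJ p n d) := by
  have hple := pk_le hp n d
  rcases div_cases hp n d with hA | ⟨hB, hkn, hd1⟩
  · set k := min (d / p) n with hk
    have he : X * eJ p n d = eJ p n (d+1) := by
      rw [eJ, eJ, hA, ← hk,
        show d + 1 - p * k = (d - p * k) + 1 from by omega]
      ring
    have hc : n - (d+1) / p = n - d / p := by
      have h1 : d / p ≤ (d+1) / p := Nat.div_le_div_right (by omega)
      by_cases h4 : d / p < n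
      · have : min ((d+1)/p) n = d / p := by rw [hA]; omega
        omega
      · omega
    rw [mul_smul_comm, he, ← hc]
    exact Submodule.subset_span (Set.mem_range_self (d+1))
  · set k := d / p with hk
    have hd1' : d + 1 = p * k + p := by rw [hd1, Nat.mul_add, Nat.mul_one]
    have hmin : min (d / p) n = k := by omega
    have hdp1 : (d+1)/p = k + 1 := by rw [hd1, Nat.mul_div_cancel_left _ hp.pos]
    have hpk1 : (p*k+1)/p = k := by
      rw [Nat.mul_add_div hp.pos, Nat.div_eq_of_lt hp.one_lt, add_zero]
    have hE1 : eJ p n (d+1) = (X ^ p - X : Polynomial ℤ) ^ (k+1) := by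
      rw [eJ, hdp1, min_eq_left (by omega), show d + 1 - p * (k+1) = 0 from by rw [Nat.mul_add, Nat.mul_one]; omega,
        pow_zero, mul_one]
    have hE2 : eJ p n (p*k+1) = (X ^ p - X : Polynomial ℤ) ^ k * X := by
      rw [eJ, hpk1, min_eq_left (by omega), show p*k + 1 - p*k = 1 from by omega, pow_one]
    have he : X * eJ p n d = eJ p n (d+1) + eJ p n (p*k+1) := by
      rw [eJ, hmin, show d - p * k = p - 1 from by omega, hE1, hE2]
      calc X * ((X^p - X : Polynomial ℤ)^k * X^(p-1))
          = (X^p - X : Polynomial ℤ)^k * (X^(p-1) * X) := by ring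
        _ = (X^p - X : Polynomial ℤ)^k * X^p := by
            rw [← pow_succ, show p - 1 + 1 = p from by have := hp.pos; omega]
        _ = (X^p - X : Polynomial ℤ)^(k+1) + (X^p - X : Polynomial ℤ)^k * X := by ring
    rw [mul_smul_comm, he, smul_add]
    refine Submodule.add_mem _ ?_ ?_
    · have hq : (p:ℤ)^(n - d/p) • eJ p n (d+1)
          = (p:ℤ) • (((p:ℤ)^(n - (d+1)/p)) • eJ p n (d+1)) := by
        rw [smul_smul, hdp1, ← hk]
        congr 1
        rw [← pow_succ', show n - k = (n - (k+1)) + 1 from by omega]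
      rw [hq]
      exact Submodule.smul_mem _ _ (Submodule.subset_span (Set.mem_range_self (d+1)))
    · rw [show n - d/p = n - (p*k+1)/p from by rw [hpk1]]
      exact Submodule.subset_span (Set.mem_range_self (p*k+1))

lemma X_mul_mem {f : Polynomial ℤ}
    (hf : f ∈ Submodule.span ℤ (Set.range fun d => ((p:ℤ) ^ (n - d / p)) • eJ p n d)) :
    X * f ∈ Submodule.span ℤ (Set.range fun d => ((p:ℤ) ^ (n - d / p)) • eJ p n d) := by
  induction hf using Submodule.span_induction with
  | mem x hx =>
    obtain ⟨d, rfl⟩ := hx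
    exact X_mul_gen_mem hp n d
  | zero => rw [mul_zero]; exact Submodule.zero_mem _
  | add x y _ _ hx hy => rw [mul_add]; exact Submodule.add_mem _ hx hy
  | smul a x _ hx => rw [mul_smul_comm]; exact Submodule.smul_mem _ a hx

lemma poly_mul_mem (r : Polynomial ℤ) {f : Polynomial ℤ}
    (hf : f ∈ Submodule.span ℤ (Set.range fun d => ((p:ℤ) ^ (n - d / p)) • eJ p n d)) :
    r * f ∈ Submodule.span ℤ (Set.range fun d => ((p:ℤ) ^ (n - d / p)) • eJ p n d) := by
  induction r using Polynomial.induction_on' with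
  | add u v hu hv => rw [add_mul]; exact Submodule.add_mem _ hu hv
  | monomial i a =>
    rw [← Polynomial.C_mul_X_pow_eq_monomial, mul_assoc, ← Polynomial.smul_eq_C_mul]
    refine Submodule.smul_mem _ a ?_
    induction i with
    | zero => simpa using hf
    | succ i ih =>
      rw [pow_succ, mul_comm (X ^ i) X, mul_assoc]
      exact X_mul_mem hp n ih

lemma mem_idealJ_iff (f : Polynomial ℤ) :
    f ∈ idealJ p n ↔
      f ∈ Submodule.span ℤ (Set.range fun d => ((p:ℤ) ^ (n - d / p)) • eJ p n d) := by
  constructor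
  · intro hf
    induction hf using Submodule.span_induction with
    | mem x hx =>
      obtain ⟨k, hkn, rfl⟩ := hx
      have : (Polynomial.C ((p:ℤ) ^ (n - k)) * (X ^ p - X) ^ k)
          = ((p:ℤ) ^ (n - (p*k) / p)) • eJ p n (p*k) := by
        have hdiv : (p*k)/p = k := Nat.mul_div_cancel_left _ hp.pos
        rw [Polynomial.smul_eq_C_mul, eJ, hdiv, min_eq_left hkn,
          show p*k - p*k = 0 from by omega, pow_zero, mul_one]
      rw [this]
      exact Submodule.subset_span (Set.mem_range_self (p*k))
    | zero => exact Submodule.zero_mem _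
    | add x y _ _ hx hy => exact Submodule.add_mem _ hx hy
    | smul a x _ hx => exact poly_mul_mem hp n a hx
  · intro hf
    induction hf using Submodule.span_induction with
    | mem x hx =>
      obtain ⟨d, rfl⟩ := hx
      exact spanJ_gen_mem_idealJ hp n d
    | zero => exact Submodule.zero_mem _
    | add x y _ _ hx hy => exact Submodule.add_mem _ hx hy
    | smul a x _ hx =>
      rw [Polynomial.smul_eq_C_mul]
      exact Ideal.mul_mem_left _ _ hx

lemma idealJ_le_idealI_gen (k : ℕ) (hk : k ≤ n) (a : ℤ) :
    (p:ℤ) ^ n ∣ (Polynomial.C ((p:ℤ) ^ (n - k)) * (X ^ p - X) ^ k).eval a := by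
  haveI : Fact p.Prime := ⟨hp⟩
  have hferm : (p:ℤ) ∣ a ^ p - a := by
    have : ((a ^ p - a : ℤ) : ZMod p) = 0 := by
      push_cast
      rw [ZMod.pow_card]
      ring
    exact (ZMod.intCast_zmod_eq_zero_iff_dvd _ p).mp this
  have h2 : (p:ℤ) ^ k ∣ (a ^ p - a) ^ k := pow_dvd_pow_of_dvd hferm k
  rw [Polynomial.eval_mul, Polynomial.eval_C, Polynomial.eval_pow, Polynomial.eval_sub,
    Polynomial.eval_pow, Polynomial.eval_X]
  calc (p:ℤ) ^ n = (p:ℤ) ^ (n - k) * (p:ℤ) ^ k := by rw [← pow_add]; congr 1; omega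
    _ ∣ _ := mul_dvd_mul dvd_rfl h2

end J


lemma sumJ {p : ℕ} (hp : 0 < p) (n : ℕ) :
    ∑ d ∈ range (n * p), (n - d / p) = ∑ k ∈ Icc 1 n, k * p := by
  induction n with
  | zero => simp
  | succ n ih =>
    have hsplit : ∑ d ∈ range ((n+1) * p), (n + 1 - d / p)
        = (∑ d ∈ range (n*p), (n + 1 - d / p)) + ∑ j ∈ range p, (n + 1 - (n*p + j) / p) := by
      rw [show (n+1) * p = n*p + p from by ring, Finset.sum_range_add]
    have h2 : ∀ j ∈ range p, (n + 1 - (n*p + j) / p) = 1 := by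
      intro j hj
      rw [Finset.mem_range] at hj
      rw [show n*p + j = j + p*n from by ring, Nat.add_mul_div_left _ _ hp,
        Nat.div_eq_of_lt hj]
      omega
    have h3 : ∀ d ∈ range (n*p), (n + 1 - d / p) = (n - d / p) + 1 := by
      intro d hd
      rw [Finset.mem_range] at hd
      have : d / p < n := Nat.div_lt_of_lt_mul (by rw [Nat.mul_comm]; exact hd)
      omega
    rw [hsplit, Finset.sum_congr rfl h2, Finset.sum_congr rfl h3, Finset.sum_add_distrib]
    simp only [Finset.sum_const, Finset.card_range, smul_eq_mul, mul_one, ih]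
    rw [Finset.sum_Icc_succ_top (by omega : 1 ≤ n + 1)]
    ring


theorem idealI_idealJ_indices (p : ℕ) (hp : p.Prime) (n : ℕ) (hn : 1 ≤ n) :
    (idealI p n).toAddSubgroup.index = p ^ (∑ k ∈ Finset.Icc 1 n, betaP p k) ∧
    (idealJ p n).toAddSubgroup.index = p ^ (∑ k ∈ Finset.Icc 1 n, k * p) ∧
    (idealJ p n = idealI p n ↔ n ≤ p) ∧
    (p < n → idealJ p n < idealI p n) := by
  haveI : Fact p.Prime := ⟨hp⟩
  have hp2 := hp.two_le
  -- index of I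
  have hmI : ∀ d, (descPochhammer ℤ d).Monic := fun d => monic_descPochhammer ℤ d
  have hdI : ∀ d, (descPochhammer ℤ d).natDegree = d := fun d => descPochhammer_natDegree (R := ℤ) d
  have hIdx : (idealI p n).toAddSubgroup.index = p ^ (∑ k ∈ Finset.Icc 1 n, betaP p k) := by
    have hrange : (Set.range fun d => ((p ^ (n - alphaP p d) : ℕ) : ℤ) •
        basisOfMonic _ hmI hdI d)
        = Set.range fun d => ((p:ℤ) ^ (n - alphaP p d)) • descPochhammer ℤ d := by
      refine congrArg Set.range (funext fun d => ?_)
      rw [basisOfMonic_apply]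
      push_cast
      rfl
    have heq : (idealI p n).toAddSubgroup
        = (Submodule.span ℤ (Set.range fun d => ((p ^ (n - alphaP p d) : ℕ) : ℤ) •
            basisOfMonic _ hmI hdI d)).toAddSubgroup := by
      ext f
      rw [Submodule.mem_toAddSubgroup, Submodule.mem_toAddSubgroup, hrange,
        ← mem_idealI_iff hp n f]
    have hD1 : ∀ d, betaP p n ≤ d → p ^ (n - alphaP p d) = 1 := by
      intro d hd
      have : n ≤ alphaP p d := le_trans (le_alphaP_betaP hp n) (alphaP_mono hp hd)
      rw [show n - alphaP p d = 0 from by omega, pow_zero]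
    rw [heq, index_span_smul_basis _ (fun d => p ^ (n - alphaP p d))
      (fun d => (pow_ne_zero _ (by omega))) (betaP p n) hD1,
      Finset.prod_pow_eq_pow_sum, sum_betaP hp]
  have hJdx : (idealJ p n).toAddSubgroup.index = p ^ (∑ k ∈ Finset.Icc 1 n, k * p) := by
    have hrange : (Set.range fun d => ((p ^ (n - d / p) : ℕ) : ℤ) •
        basisOfMonic _ (monic_eJ hp n) (natDegree_eJ hp n) d)
        = Set.range fun d => ((p:ℤ) ^ (n - d / p)) • eJ p n d := by
      refine congrArg Set.range (funext fun d => ?_)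
      rw [basisOfMonic_apply]
      push_cast
      rfl
    have heq : (idealJ p n).toAddSubgroup
        = (Submodule.span ℤ (Set.range fun d => ((p ^ (n - d / p) : ℕ) : ℤ) •
            basisOfMonic _ (monic_eJ hp n) (natDegree_eJ hp n) d)).toAddSubgroup := by
      ext f
      rw [Submodule.mem_toAddSubgroup, Submodule.mem_toAddSubgroup, hrange,
        ← mem_idealJ_iff hp n f]
    have hD1 : ∀ d, n * p ≤ d → p ^ (n - d / p) = 1 := by
      intro d hd
      have : n ≤ d / p := (Nat.le_div_iff_mul_le hp.pos).mpr hd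
      rw [show n - d / p = 0 from by omega, pow_zero]
    rw [heq, index_span_smul_basis _ (fun d => p ^ (n - d / p))
      (fun d => (pow_ne_zero _ (by omega))) (n * p) hD1,
      Finset.prod_pow_eq_pow_sum, sumJ hp.pos]
  -- J ≤ I
  have hJI : idealJ p n ≤ idealI p n := by
    rw [idealJ]
    refine Ideal.span_le.mpr ?_
    rintro g ⟨k, hk, rfl⟩
    intro a
    exact idealJ_le_idealI_gen hp n k hk a
  have hJIadd : (idealJ p n).toAddSubgroup ≤ (idealI p n).toAddSubgroup :=
    fun x hx => hJI hx
  have hterm : ∀ k ∈ Finset.Icc 1 n, betaP p k ≤ k * p := fun k _ => betaP_le hp k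
  have hiff : idealJ p n = idealI p n ↔ n ≤ p := by
    constructor
    · intro h
      by_contra hc
      have hElt : (∑ k ∈ Finset.Icc 1 n, betaP p k) < ∑ k ∈ Finset.Icc 1 n, k * p := by
        refine Finset.sum_lt_sum hterm ⟨n, Finset.mem_Icc.mpr ⟨hn, le_rfl⟩, ?_⟩
        exact betaP_lt_of_gt hp (by omega)
      have : (idealJ p n).toAddSubgroup.index = (idealI p n).toAddSubgroup.index := by rw [h]
      rw [hIdx, hJdx] at this
      have := Nat.pow_right_injective hp2 this.symm
      omega
    · intro hnp
      have hEeq : (∑ k ∈ Finset.Icc 1 n, betaP p k) = ∑ k ∈ Finset.Icc 1 n, k * p := by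
        refine Finset.sum_congr rfl (fun k hk => ?_)
        have := Finset.mem_Icc.mp hk
        exact betaP_eq_of_le hp (by omega)
      have hrel := AddSubgroup.relIndex_mul_index hJIadd
      rw [hIdx, hJdx, hEeq] at hrel
      have hne : (0:ℕ) < p ^ (∑ k ∈ Finset.Icc 1 n, k * p) := pow_pos (by omega) _
      have hone : ((idealJ p n).toAddSubgroup.relIndex (idealI p n).toAddSubgroup) = 1 := by
        have := hrel
        nlinarith [AddSubgroup.relIndex_mul_index hJIadd]
      have hIJ : (idealI p n).toAddSubgroup ≤ (idealJ p n).toAddSubgroup :=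
        (AddSubgroup.relIndex_eq_one).mp hone
      refine le_antisymm hJI (fun x hx => ?_)
      exact hIJ hx
  refine ⟨hIdx, hJdx, hiff, fun hpn => ?_⟩
  refine lt_of_le_of_ne hJI (fun h => ?_)
  have := hiff.mp h
  omega
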